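/- Let E be a real inner product space and let F : E → ℝ be differentiable and L-smooth, and let F* ∈ ℝ satisfy F* ≤ F(w) for all w ∈ E. Fix real parameters with 0 < L, 0 ≤ α < 1, ψ > 0, ρ > 0, γ > 0, 0 < η ≤ 1/(4L), and γ ≤ ρ/(L·ψ·(1−α)). Let w⁰ ∈ E and for each t = 0, 1, …, T−1 define w^{t+½} = wᵗ − η∇F(wᵗ) and w^{t+1} = w^{t+½} + (1−α)·uᵗ, where uᵗ ∈ E satisfies ‖uᵗ‖ ≤ γψ, and assume ‖w^{t+½}‖ ≤ ψ and ‖∇F(wᵗ)‖ ≤ ρ for all t. Then for T ≥ 1, (1/T)·Σ_{t=0}^{T−1} ‖∇F(wᵗ)‖² ≤ 2(F(w⁰) − F*)/(ηT) + 4γρψ(1−α)/η. -/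

import Mathlib

open RealInnerProductSpace

lemma descent_lemma
    {E : Type*} [NormedAddCommGroup E] [InnerProductSpace ℝ E]
    {F : E → ℝ} {F' : E → E}
    (hdiff : ∀ x, HasFDerivAt F (InnerProductSpace.toDualMap ℝ E (F' x) : E →L[ℝ] ℝ) x)
    {L : ℝ}
    (hsmooth : ∀ x y, ‖F' x - F' y‖ ≤ L * ‖x - y‖) (x y : E) :
    F y ≤ F x + ⟪F' x, y - x⟫ + L / 2 * ‖y - x‖ ^ 2 := by
  set v := y - x with hv
  set φ : ℝ → ℝ := fun t => F (x + t • v) - t * ⟪F' x, v⟫ - L / 2 * t ^ 2 * ‖v‖ ^ 2 with hφ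
  have hφ' : ∀ t : ℝ, HasDerivAt φ
      (⟪F' (x + t • v), v⟫ - ⟪F' x, v⟫ - L * t * ‖v‖ ^ 2) t := by
    intro t
    have hc : HasDerivAt (fun t : ℝ => x + t • v) v t := by
      simpa using ((hasDerivAt_id t).smul_const v).const_add x
    have h1 : HasDerivAt (fun t : ℝ => F (x + t • v)) (⟪F' (x + t • v), v⟫) t := by
      have := (hdiff (x + t • v)).comp_hasDerivAt t hc
      simp only [InnerProductSpace.toDualMap_apply_apply, ContinuousLinearMap.coe_coe] at this
      exact this
    have h2 : HasDerivAt (fun t : ℝ => t * ⟪F' x, v⟫) (⟪F' x, v⟫) t := by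
      simpa using (hasDerivAt_id t).mul_const (⟪F' x, v⟫)
    have h3 : HasDerivAt (fun t : ℝ => L / 2 * t ^ 2 * ‖v‖ ^ 2) (L * t * ‖v‖ ^ 2) t := by
      have := ((hasDerivAt_pow 2 t).const_mul (L / 2)).mul_const (‖v‖ ^ 2)
      refine this.congr_deriv ?_
      ring
    exact (h1.sub h2).sub h3
  have hanti : AntitoneOn φ (Set.Icc 0 1) := by
    apply antitoneOn_of_deriv_nonpos (convex_Icc 0 1)
    · exact fun t _ => ((hφ' t).continuousAt).continuousWithinAt
    · exact fun t _ => (hφ' t).differentiableAt.differentiableWithinAt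
    · intro t ht
      rw [(hφ' t).deriv]
      rw [interior_Icc] at ht
      have hb : ⟪F' (x + t • v) - F' x, v⟫ ≤ L * t * ‖v‖ ^ 2 := by
        calc ⟪F' (x + t • v) - F' x, v⟫ ≤ ‖F' (x + t • v) - F' x‖ * ‖v‖ :=
              real_inner_le_norm _ _
          _ ≤ (L * ‖(x + t • v) - x‖) * ‖v‖ := by
              gcongr; exact hsmooth _ _
          _ = L * t * ‖v‖ ^ 2 := by
              simp [norm_smul, abs_of_pos ht.1]; ring
      have : ⟪F' (x + t • v), v⟫ - ⟪F' x, v⟫ ≤ L * t * ‖v‖ ^ 2 := by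
        rw [← inner_sub_left]; exact hb
      linarith
  have h01 := hanti (Set.left_mem_Icc.2 zero_le_one) (Set.right_mem_Icc.2 zero_le_one) zero_le_one
  simp only [hφ, one_smul, zero_smul, add_zero, one_pow, mul_one, one_mul] at h01
  have : x + v = y := by rw [hv]; abel
  rw [this] at h01
  norm_num at h01
  linarith

set_option maxHeartbeats 1000000 in
/-- Deterministic (exact-gradient) core of Theorem 2: BALANCE with L-smooth
objective drives the average squared gradient norm to a neighborhood of zero. -/
theorem balance_nonconvex_deterministic
    {E : Type*} [NormedAddCommGroup E] [InnerProductSpace ℝ E]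
    {F : E → ℝ} {F' : E → E}
    (hdiff : ∀ x, HasFDerivAt F (InnerProductSpace.toDualMap ℝ E (F' x) : E →L[ℝ] ℝ) x)
    {L α ψ ρ γ η Fstar : ℝ}
    (hsmooth : ∀ x y, ‖F' x - F' y‖ ≤ L * ‖x - y‖)
    (hlb : ∀ x, Fstar ≤ F x)
    (hL : 0 < L) (hα0 : 0 ≤ α) (hα1 : α < 1)
    (hψ : 0 < ψ) (hρ : 0 < ρ) (hγ : 0 < γ)
    (hη0 : 0 < η) (hη : η ≤ 1 / (4 * L))
    (hγle : γ ≤ ρ / (L * ψ * (1 - α)))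
    {T : ℕ} (hT : 1 ≤ T) (w : ℕ → E) (u : ℕ → E)
    (hupdate : ∀ t < T, w (t + 1) = (w t - η • F' (w t)) + (1 - α) • u t)
    (hu : ∀ t < T, ‖u t‖ ≤ γ * ψ)
    (hψbd : ∀ t < T, ‖w t - η • F' (w t)‖ ≤ ψ)
    (hρbd : ∀ t < T, ‖F' (w t)‖ ≤ ρ) :
    (1 / (T : ℝ)) * ∑ t ∈ Finset.range T, ‖F' (w t)‖ ^ 2 ≤
      2 * (F (w 0) - Fstar) / (η * T) + 4 * γ * ρ * ψ * (1 - α) / η := by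
  have hc1 : (0:ℝ) < 1 - α := by linarith
  have hLη2 : L * η ^ 2 ≤ η / 4 := by
    have : η * (4 * L) ≤ 1 := (le_div_iff₀ (by positivity)).mp hη
    nlinarith
  have hγL : γ * (L * ψ * (1 - α)) ≤ ρ := (le_div_iff₀ (by positivity)).mp hγle
  -- per-step decrease
  have hstep : ∀ t < T, F (w (t + 1)) ≤
      F (w t) - η / 2 * ‖F' (w t)‖ ^ 2 + 2 * γ * ρ * ψ * (1 - α) := by
    intro t ht
    have hd := descent_lemma hdiff hsmooth (w t) (w (t + 1))
    have hdiffw : w (t + 1) - w t = (1 - α) • u t - η • F' (w t) := by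
      rw [hupdate t ht]; abel
    have hinner : ⟪F' (w t), w (t + 1) - w t⟫ ≤
        -(η * ‖F' (w t)‖ ^ 2) + (1 - α) * (ρ * (γ * ψ)) := by
      rw [hdiffw, inner_sub_right, real_inner_smul_right, real_inner_smul_right,
        real_inner_self_eq_norm_sq]
      have h1 : ⟪F' (w t), u t⟫ ≤ ρ * (γ * ψ) := by
        calc ⟪F' (w t), u t⟫ ≤ ‖F' (w t)‖ * ‖u t‖ := real_inner_le_norm _ _
          _ ≤ ρ * (γ * ψ) := mul_le_mul (hρbd t ht) (hu t ht) (norm_nonneg _) hρ.le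
      nlinarith
    have hnormd : ‖w (t + 1) - w t‖ ≤ η * ‖F' (w t)‖ + (1 - α) * (γ * ψ) := by
      rw [hdiffw]
      calc ‖(1 - α) • u t - η • F' (w t)‖
          ≤ ‖(1 - α) • u t‖ + ‖η • F' (w t)‖ := norm_sub_le _ _
        _ ≤ η * ‖F' (w t)‖ + (1 - α) * (γ * ψ) := by
            rw [norm_smul, norm_smul, Real.norm_eq_abs, Real.norm_eq_abs,
              abs_of_pos hc1, abs_of_pos hη0]
            have := hu t ht
            nlinarith [norm_nonneg (u t)]
    have hnormd2 : ‖w (t + 1) - w t‖ ^ 2 ≤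
        2 * η ^ 2 * ‖F' (w t)‖ ^ 2 + 2 * (1 - α) ^ 2 * (γ * ψ) ^ 2 := by
      have hsq : ‖w (t + 1) - w t‖ ^ 2 ≤ (η * ‖F' (w t)‖ + (1 - α) * (γ * ψ)) ^ 2 :=
        pow_le_pow_left₀ (norm_nonneg _) hnormd 2
      nlinarith [sq_nonneg (η * ‖F' (w t)‖ - (1 - α) * (γ * ψ))]
    have e1 : L / 2 * ‖w (t + 1) - w t‖ ^ 2 ≤
        L * η ^ 2 * ‖F' (w t)‖ ^ 2 + L * (1 - α) ^ 2 * (γ * ψ) ^ 2 := by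
      nlinarith [hL.le]
    have e2 : L * η ^ 2 * ‖F' (w t)‖ ^ 2 ≤ η / 4 * ‖F' (w t)‖ ^ 2 :=
      mul_le_mul_of_nonneg_right hLη2 (sq_nonneg _)
    have e3 : L * (1 - α) ^ 2 * (γ * ψ) ^ 2 ≤ γ * ρ * ψ * (1 - α) := by
      have h := mul_le_mul_of_nonneg_right hγL
        (show (0:ℝ) ≤ γ * ψ * (1 - α) by positivity)
      linarith
    have hηg : (0:ℝ) ≤ η * ‖F' (w t)‖ ^ 2 := by positivity
    linarith [hd, hinner]
  -- telescoping sum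
  set C := 2 * γ * ρ * ψ * (1 - α) with hC
  have hsum : η / 2 * ∑ t ∈ Finset.range T, ‖F' (w t)‖ ^ 2 ≤
      (F (w 0) - F (w T)) + T * C := by
    have h1 : ∑ t ∈ Finset.range T, (η / 2 * ‖F' (w t)‖ ^ 2) ≤
        ∑ t ∈ Finset.range T, ((F (w t) - F (w (t + 1))) + C) := by
      apply Finset.sum_le_sum
      intro t ht
      have := hstep t (Finset.mem_range.mp ht)
      linarith
    rw [← Finset.mul_sum] at h1
    rw [Finset.sum_add_distrib, Finset.sum_const, Finset.card_range,
      Finset.sum_range_sub' (fun t => F (w t))] at h1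
    simpa [nsmul_eq_mul] using h1
  have hD : F (w 0) - F (w T) ≤ F (w 0) - Fstar := by linarith [hlb (w T)]
  have hTpos : (0:ℝ) < T := by exact_mod_cast hT
  have hS : ∑ t ∈ Finset.range T, ‖F' (w t)‖ ^ 2 ≤
      2 * ((F (w 0) - Fstar) + T * C) / η := by
    rw [le_div_iff₀ hη0]
    nlinarith
  calc (1 / (T : ℝ)) * ∑ t ∈ Finset.range T, ‖F' (w t)‖ ^ 2 ≤
      (1 / (T : ℝ)) * (2 * ((F (w 0) - Fstar) + T * C) / η) := by
        apply mul_le_mul_of_nonneg_left hS (by positivity)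
    _ = 2 * (F (w 0) - Fstar) / (η * T) + 4 * γ * ρ * ψ * (1 - α) / η := by
        rw [hC]
        have hηne : η ≠ 0 := hη0.ne'
        have hTne : (T:ℝ) ≠ 0 := hTpos.ne'
        field_simp
        ring
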